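/- Fix n ≥ 3 and let y ∈ [1, n − 1]. (1) If y is irrational, then the sequence A^y given by A^y_t = ⌊yt⌋ is an arm sequence, and it is the unique arm sequence A with lim_{t→∞} A_t/t = y. (2) If y is rational, then the two sequences A^{y,+} and A^{y,−} given by A^{y,+}_t = ⌊yt⌋ and A^{y,−}_t = ⌈yt − 1⌉ are arm sequences, and they are the only arm sequences A with lim_{t→∞} A_t/t = y. -/

import Mathlib

/-!  Arm sequences (Section 6 of the paper).  An arm sequence for `n` is an integer
sequence `A` with `t - 1 ≤ A t ≤ (n-1)t` for `t ≥ 1` and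
`A (t+u) ∈ {A t + A u, A t + A u + 1}` for `t, u ≥ 1` (the value `A 0` is irrelevant;
two arm sequences are regarded as equal when they agree at all `t ≥ 1`). -/

namespace ArmCrystal

/-- `A` is an arm sequence for `n`. -/
def IsArmSeq (n : ℕ) (A : ℕ → ℤ) : Prop :=
  (∀ t : ℕ, 1 ≤ t → (t : ℤ) - 1 ≤ A t ∧ A t ≤ ((n : ℤ) - 1) * t) ∧
  (∀ t u : ℕ, 1 ≤ t → 1 ≤ u → A (t + u) = A t + A u ∨ A (t + u) = A t + A u + 1)

/-- `A` tends to `y`, i.e. `A t / t → y`. -/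
def TendsToRatio (A : ℕ → ℤ) (y : ℝ) : Prop :=
  Filter.Tendsto (fun t : ℕ => (A t : ℝ) / t) Filter.atTop (nhds y)

open Filter

lemma superadd {A : ℕ → ℤ}
    (h : ∀ t u : ℕ, 1 ≤ t → 1 ≤ u → A (t + u) = A t + A u ∨ A (t + u) = A t + A u + 1) :
    ∀ k t : ℕ, 1 ≤ k → 1 ≤ t →
      (k : ℤ) * A t ≤ A (k * t) ∧ A (k * t) ≤ k * A t + ((k : ℤ) - 1) := by
  intro k
  induction k with
  | zero => omega
  | succ k ih =>
    intro t _ ht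
    rcases Nat.eq_zero_or_pos k with hk0 | hk1
    · subst hk0; simp
    · obtain ⟨h1, h2⟩ := ih t hk1 ht
      have hadd := h (k * t) t (Nat.mul_pos hk1 ht) ht
      have : (k + 1) * t = k * t + t := by ring
      rw [this]
      rcases hadd with he | he <;> rw [he] <;> push_cast <;> constructor <;> linarith

lemma arm_bounds {A : ℕ → ℤ}
    (h : ∀ t u : ℕ, 1 ≤ t → 1 ≤ u → A (t + u) = A t + A u ∨ A (t + u) = A t + A u + 1)
    {y : ℝ} (hy : TendsToRatio A y)
    {t : ℕ} (ht : 1 ≤ t) : y * t - 1 ≤ (A t : ℝ) ∧ (A t : ℝ) ≤ y * t := by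
  have htR : (0:ℝ) < t := by exact_mod_cast ht
  have hcomp : Tendsto (fun k : ℕ => k * t) atTop atTop :=
    Filter.tendsto_atTop_atTop.mpr fun b => ⟨b, fun a ha => ha.trans (Nat.le_mul_of_pos_right a ht)⟩
  have htend : Tendsto (fun k : ℕ => (A (k * t) : ℝ) / ((k * t : ℕ) : ℝ)) atTop (nhds y) :=
    hy.comp hcomp
  have h1 : (A t : ℝ) / t ≤ y := by
    refine ge_of_tendsto htend ?_
    filter_upwards [eventually_ge_atTop 1] with k hk
    have hkR : (0:ℝ) < k := by exact_mod_cast hk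
    have := (superadd h k t hk ht).1
    have hZ : ((k:ℤ) * A t : ℝ) ≤ (A (k*t) : ℝ) := by exact_mod_cast this
    push_cast at hZ ⊢
    rw [div_le_div_iff₀ htR (by positivity)]
    nlinarith
  have h2 : y ≤ ((A t : ℝ) + 1) / t := by
    refine le_of_tendsto htend ?_
    filter_upwards [eventually_ge_atTop 1] with k hk
    have hkR : (0:ℝ) < k := by exact_mod_cast hk
    have := (superadd h k t hk ht).2
    have hZ : (A (k*t) : ℝ) ≤ (k:ℝ) * (A t : ℝ) + ((k:ℝ) - 1) := by exact_mod_cast this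
    push_cast
    rw [div_le_div_iff₀ (by positivity) htR]
    nlinarith
  rw [div_le_iff₀ htR] at h1
  rw [le_div_iff₀ htR] at h2
  constructor <;> linarith

lemma not_both {A : ℕ → ℤ}
    (h : ∀ t u : ℕ, 1 ≤ t → 1 ≤ u → A (t + u) = A t + A u ∨ A (t + u) = A t + A u + 1)
    {y : ℝ} {t₁ t₂ : ℕ} (h1 : 1 ≤ t₁) (h2 : 1 ≤ t₂)
    (e1 : (A t₁ : ℝ) = y * t₁) (e2 : (A t₂ : ℝ) = y * t₂ - 1) : False := by
  obtain ⟨l1, _⟩ := superadd h t₂ t₁ h2 h1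
  obtain ⟨_, u2⟩ := superadd h t₁ t₂ h1 h2
  rw [Nat.mul_comm] at l1
  have l1R : ((t₂:ℝ)) * (A t₁ : ℝ) ≤ (A (t₁ * t₂) : ℝ) := by exact_mod_cast l1
  have u2R : (A (t₁ * t₂) : ℝ) ≤ (t₁:ℝ) * (A t₂ : ℝ) + ((t₁:ℝ) - 1) := by exact_mod_cast u2
  have ht1R : (1:ℝ) ≤ t₁ := by exact_mod_cast h1
  rw [e1] at l1R
  rw [e2] at u2R
  nlinarith

lemma floor_arm {n : ℕ} (hn : 3 ≤ n) {y : ℝ} (hy : y ∈ Set.Icc (1 : ℝ) ((n : ℝ) - 1)) :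
    IsArmSeq n (fun t : ℕ => ⌊y * t⌋) := by
  obtain ⟨hy1, hy2⟩ := hy
  constructor
  · intro t ht
    dsimp only
    have htR : (0:ℝ) < t := by exact_mod_cast ht
    refine ⟨?_, ?_⟩
    · have h1 : (t:ℤ) ≤ ⌊y * t⌋ := Int.le_floor.mpr (by push_cast; nlinarith)
      omega
    · have hle : y * t ≤ (((n:ℤ) - 1) * t : ℤ) := by push_cast; nlinarith
      calc ⌊y * t⌋ ≤ ⌊((((n:ℤ) - 1) * t : ℤ) : ℝ)⌋ := Int.floor_le_floor hle
        _ = ((n:ℤ) - 1) * t := Int.floor_intCast _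
  · intro t u ht hu
    dsimp only
    have key1 : ⌊y * t⌋ + ⌊y * u⌋ ≤ ⌊y * (t + u : ℕ)⌋ := by
      apply Int.le_floor.mpr
      push_cast
      have := Int.floor_le (y * t)
      have := Int.floor_le (y * u)
      rw [mul_add]
      push_cast at *
      linarith
    have key2 : ⌊y * (t + u : ℕ)⌋ < ⌊y * t⌋ + ⌊y * u⌋ + 2 := by
      apply Int.floor_lt.mpr
      push_cast
      have := Int.lt_floor_add_one (y * t)
      have := Int.lt_floor_add_one (y * u)
      rw [mul_add]
      linarith
    omega

lemma ceil_arm {n : ℕ} (hn : 3 ≤ n) {y : ℝ} (hy : y ∈ Set.Icc (1 : ℝ) ((n : ℝ) - 1)) :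
    IsArmSeq n (fun t : ℕ => ⌈y * t - 1⌉) := by
  obtain ⟨hy1, hy2⟩ := hy
  constructor
  · intro t ht
    have htR : (0:ℝ) < t := by exact_mod_cast ht
    constructor
    · apply Int.le_ceil_iff.mpr
      push_cast
      nlinarith
    · apply Int.ceil_le.mpr
      push_cast
      nlinarith
  · intro t u ht hu
    dsimp only
    have key1 : ⌈y * t - 1⌉ + ⌈y * u - 1⌉ ≤ ⌈y * (t + u : ℕ) - 1⌉ := by
      apply Int.le_ceil_iff.mpr
      push_cast
      have h1 := Int.ceil_lt_add_one (y * t - 1)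
      have h2 := Int.ceil_lt_add_one (y * u - 1)
      rw [mul_add]
      linarith
    have key2 : ⌈y * (t + u : ℕ) - 1⌉ ≤ ⌈y * t - 1⌉ + ⌈y * u - 1⌉ + 1 := by
      apply Int.ceil_le.mpr
      push_cast
      have h1 := Int.le_ceil (y * t - 1)
      have h2 := Int.le_ceil (y * u - 1)
      rw [mul_add]
      linarith
    omega

lemma squeeze_ratio {B : ℕ → ℤ} {y : ℝ}
    (hlow : ∀ t : ℕ, 1 ≤ t → y * t - 1 ≤ (B t : ℝ))
    (hhigh : ∀ t : ℕ, 1 ≤ t → (B t : ℝ) ≤ y * t) :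
    TendsToRatio B y := by
  have hl : Tendsto (fun t : ℕ => y - 1 / (t:ℝ)) atTop (nhds y) := by
    have := tendsto_one_div_atTop_nhds_zero_nat (𝕜 := ℝ)
    simpa using tendsto_const_nhds.sub this
  refine tendsto_of_tendsto_of_tendsto_of_le_of_le' hl tendsto_const_nhds ?_ ?_
  · filter_upwards [eventually_ge_atTop 1] with t ht
    have htR : (0:ℝ) < t := by exact_mod_cast ht
    have h := hlow t ht
    have h2 : (y * t - 1)/(t:ℝ) ≤ (B t : ℝ)/(t:ℝ) := by gcongr
    calc y - 1/(t:ℝ) = (y * t - 1)/(t:ℝ) := by field_simp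
      _ ≤ _ := h2
  · filter_upwards [eventually_ge_atTop 1] with t ht
    have htR : (0:ℝ) < t := by exact_mod_cast ht
    have := hhigh t ht
    rw [div_le_iff₀ htR]
    linarith

/-- Lemma 6.5 of the paper: for `y ∈ [1, n-1]`: (1) if `y` is irrational, the sequence
`A^y : t ↦ ⌊y t⌋` is an arm sequence, and it is the unique arm sequence tending to `y`;
(2) if `y` is rational, the sequences `A^{y,+} : t ↦ ⌊y t⌋` and `A^{y,-} : t ↦ ⌈y t - 1⌉`
are arm sequences, and they are the only arm sequences tending to `y`. -/
theorem arm_sequences_with_given_limit (n : ℕ) (hn : 3 ≤ n)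
    (y : ℝ) (hy : y ∈ Set.Icc (1 : ℝ) ((n : ℝ) - 1)) :
    (Irrational y →
      IsArmSeq n (fun t : ℕ => ⌊y * t⌋) ∧
      TendsToRatio (fun t : ℕ => ⌊y * t⌋) y ∧
      (∀ A : ℕ → ℤ, IsArmSeq n A → TendsToRatio A y →
        ∀ t : ℕ, 1 ≤ t → A t = ⌊y * t⌋)) ∧
    (¬ Irrational y →
      IsArmSeq n (fun t : ℕ => ⌊y * t⌋) ∧
      IsArmSeq n (fun t : ℕ => ⌈y * t - 1⌉) ∧
      TendsToRatio (fun t : ℕ => ⌊y * t⌋) y ∧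
      TendsToRatio (fun t : ℕ => ⌈y * t - 1⌉) y ∧
      (∀ A : ℕ → ℤ, IsArmSeq n A → TendsToRatio A y →
        (∀ t : ℕ, 1 ≤ t → A t = ⌊y * t⌋) ∨ (∀ t : ℕ, 1 ≤ t → A t = ⌈y * t - 1⌉))) := by
  have hfloorArm := floor_arm hn hy
  have hceilArm := ceil_arm hn hy
  have hfloorT : TendsToRatio (fun t : ℕ => ⌊y * t⌋) y := by
    apply squeeze_ratio
    · intro t ht; exact le_of_lt (Int.sub_one_lt_floor (y * t))
    · intro t ht; exact Int.floor_le (y * t)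
  have hceilT : TendsToRatio (fun t : ℕ => ⌈y * t - 1⌉) y := by
    apply squeeze_ratio
    · intro t ht; simpa using Int.le_ceil (y * t - 1)
    · intro t ht
      have := Int.ceil_lt_add_one (y * t - 1)
      linarith
  -- squeezed bounds for an arbitrary arm sequence with the right limit
  have key : ∀ A : ℕ → ℤ, IsArmSeq n A → TendsToRatio A y →
      ∀ t : ℕ, 1 ≤ t → y * t - 1 ≤ (A t : ℝ) ∧ (A t : ℝ) ≤ y * t :=
    fun A hA hAT t ht => arm_bounds hA.2 hAT ht
  constructor
  · intro hirr
    refine ⟨hfloorArm, hfloorT, ?_⟩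
    intro A hA hAT t ht
    obtain ⟨hb1, hb2⟩ := key A hA hAT t ht
    have htne : (t:ℕ) ≠ 0 := by omega
    have hirr' : Irrational (y * t) := hirr.mul_natCast htne
    have hle : A t ≤ ⌊y * t⌋ := Int.le_floor.mpr hb2
    have hstrict : ((⌊y * t⌋ : ℤ) : ℝ) < y * t := lt_of_le_of_ne (Int.floor_le _) (fun hcontra => hirr'.ne_int ⌊y * t⌋ hcontra.symm)
    have : ((⌊y * t⌋ : ℤ) : ℝ) - 1 < (A t : ℝ) := by linarith
    have : (⌊y * t⌋ : ℤ) - 1 < A t := by exact_mod_cast this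
    omega
  · intro _
    refine ⟨hfloorArm, hceilArm, hfloorT, hceilT, ?_⟩
    intro A hA hAT
    by_cases hall : ∀ t : ℕ, 1 ≤ t → A t = ⌊y * t⌋
    · exact Or.inl hall
    · right
      push_neg at hall
      obtain ⟨t₂, ht₂, hne₂⟩ := hall
      obtain ⟨hb1, hb2⟩ := key A hA hAT t₂ ht₂
      have hle : A t₂ ≤ ⌊y * t₂⌋ := Int.le_floor.mpr hb2
      have hlt : A t₂ ≤ ⌊y * t₂⌋ - 1 := by omega
      have hltR : (A t₂ : ℝ) ≤ (⌊y * t₂⌋ : ℝ) - 1 := by exact_mod_cast hlt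
      have hfl := Int.floor_le (y * t₂)
      have e2 : (A t₂ : ℝ) = y * t₂ - 1 := by linarith
      intro t ht
      obtain ⟨hc1, hc2⟩ := key A hA hAT t ht
      by_contra hne
      have hge : ⌈y * t - 1⌉ ≤ A t := Int.ceil_le.mpr hc1
      have hgt : ⌈y * t - 1⌉ + 1 ≤ A t := by omega
      have hceil := Int.le_ceil (y * t - 1)
      have hgtR : y * t ≤ (A t : ℝ) := by
        have : ((⌈y * t - 1⌉ : ℤ) : ℝ) + 1 ≤ (A t : ℝ) := by exact_mod_cast hgt
        linarith
      have e1 : (A t : ℝ) = y * t := le_antisymm hc2 hgtR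
      exact not_both hA.2 ht ht₂ e1 e2


end ArmCrystal
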